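/- Let u ∈ ℝ^n with u > 0 entrywise and ‖u‖ = 1, set λ = λ(u) = min_i (𝒜(u)u)_i / u_i, and let (Δ, δ) solve the Newton system at (u,λ). Then u + Δ > 0 entrywise, and consequently u + θΔ > 0 entrywise for every θ ∈ (0,1]. -/

import Mathlib

open Matrix Finset

noncomputable def enorm' {n : ℕ} (u : Fin n → ℝ) : ℝ := Real.sqrt (∑ i, u i ^ 2)

def IsZMatrix {n : ℕ} (B : Matrix (Fin n) (Fin n) ℝ) : Prop :=
  ∀ i j, i ≠ j → B i j ≤ 0

def IsIrreducibleMat {n : ℕ} (B : Matrix (Fin n) (Fin n) ℝ) : Prop :=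
  ¬ ∃ S : Finset (Fin n), S.Nonempty ∧ S ≠ Finset.univ ∧
    ∀ i ∈ S, ∀ j ∉ S, B i j = 0

def IsNonsingularM {n : ℕ} (B : Matrix (Fin n) (Fin n) ℝ) : Prop :=
  IsZMatrix B ∧ IsUnit B ∧ ∀ i j, 0 ≤ B⁻¹ i j

noncomputable def calA {n : ℕ} (A : Matrix (Fin n) (Fin n) ℝ) (Γ : ℝ) (a : Fin n → ℝ)
    (u : Fin n → ℝ) : Matrix (Fin n) (Fin n) ℝ :=
  A + Γ • Matrix.diagonal (fun i => 1 - 1 / (a i + u i ^ 2))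

noncomputable def rvec {n : ℕ} (A : Matrix (Fin n) (Fin n) ℝ) (Γ : ℝ) (a : Fin n → ℝ)
    (u : Fin n → ℝ) (lam : ℝ) : Fin n → ℝ :=
  calA A Γ a u *ᵥ u - lam • u

noncomputable def Jmat {n : ℕ} (A : Matrix (Fin n) (Fin n) ℝ) (Γ : ℝ) (a : Fin n → ℝ)
    (u : Fin n → ℝ) (lam : ℝ) : Matrix (Fin n) (Fin n) ℝ :=
  A + (Γ - lam) • (1 : Matrix (Fin n) (Fin n) ℝ)
    - Γ • Matrix.diagonal (fun i => (a i - u i ^ 2) / (a i + u i ^ 2) ^ 2)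

noncomputable def lamOf {n : ℕ} [NeZero n] (A : Matrix (Fin n) (Fin n) ℝ) (Γ : ℝ)
    (a : Fin n → ℝ) (u : Fin n → ℝ) : ℝ :=
  ⨅ i, (calA A Γ a u *ᵥ u) i / u i

def NewtonSystem {n : ℕ} (A : Matrix (Fin n) (Fin n) ℝ) (Γ : ℝ) (a : Fin n → ℝ)
    (u : Fin n → ℝ) (lam : ℝ) (Δ : Fin n → ℝ) (δ : ℝ) : Prop :=
  Jmat A Γ a u lam *ᵥ Δ - δ • u = -rvec A Γ a u lam ∧
  -(u ⬝ᵥ Δ) = -(1/2 * (u ⬝ᵥ u - 1))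

/-- Key lemma: if `J` is a Z-matrix and there is a positive vector `x` with
`J *ᵥ x` positive, then any `y` with `J *ᵥ y` positive is itself positive. -/
lemma key_pos {n : ℕ} [NeZero n] (J : Matrix (Fin n) (Fin n) ℝ)
    (hZ : ∀ i j, i ≠ j → J i j ≤ 0)
    (x : Fin n → ℝ) (hx : ∀ i, 0 < x i) (hJx : ∀ i, 0 < (J *ᵥ x) i)
    (y : Fin n → ℝ) (hJy : ∀ i, 0 < (J *ᵥ y) i) : ∀ i, 0 < y i := by
  obtain ⟨k, hk⟩ := Finite.exists_min (fun j => y j / x j)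
  set t : ℝ := y k / x k with ht
  have hty : ∀ j, t * x j ≤ y j := by
    intro j
    have := hk j
    rw [ht] at this
    rw [div_le_div_iff₀ (hx k) (hx j)] at this
    calc t * x j = y k / x k * x j := rfl
    _ ≤ y j := by
        rw [div_mul_eq_mul_div, div_le_iff₀ (hx k)]
        linarith [this]
  have hyk : y k = t * x k := by rw [ht, div_mul_cancel₀ _ (hx k).ne']
  have hle : (J *ᵥ y) k ≤ t * (J *ᵥ x) k := by
    have h1 : ∀ j, J k j * y j ≤ J k j * (t * x j) := by
      intro j
      by_cases hjk : j = k
      · subst hjk; rw [hyk]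
      · exact mul_le_mul_of_nonpos_left (hty j) (hZ k j (Ne.symm hjk))
    calc (J *ᵥ y) k = ∑ j, J k j * y j := by simp [Matrix.mulVec, dotProduct]
    _ ≤ ∑ j, J k j * (t * x j) := Finset.sum_le_sum (fun j _ => h1 j)
    _ = t * ∑ j, J k j * x j := by rw [Finset.mul_sum]; congr 1; ext j; ring
    _ = t * (J *ᵥ x) k := by simp [Matrix.mulVec, dotProduct]
  have ht0 : 0 < t := by
    by_contra h
    push_neg at h
    have : t * (J *ᵥ x) k ≤ 0 := mul_nonpos_of_nonpos_of_nonneg h (hJx k).le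
    linarith [hJy k]
  intro i
  have := hty i
  nlinarith [hx i]

theorem stmt_5 {n : ℕ} [NeZero n] (A : Matrix (Fin n) (Fin n) ℝ) (a : Fin n → ℝ) (Γ : ℝ)
    (ha : ∀ i, 0 < a i) (hΓ : 0 < Γ)
    (hA : IsNonsingularM A) (hAirr : IsIrreducibleMat A)
    (u : Fin n → ℝ) (hu : ∀ i, 0 < u i) (hnorm : enorm' u = 1)
    (Δ : Fin n → ℝ) (δ : ℝ)
    (hN : NewtonSystem A Γ a u (lamOf A Γ a u) Δ δ) :
    (∀ i, 0 < (u + Δ) i) ∧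
    (∀ θ : ℝ, 0 < θ → θ ≤ 1 → ∀ i, 0 < (u + θ • Δ) i) := by
  set lam : ℝ := lamOf A Γ a u with hlam
  set J : Matrix (Fin n) (Fin n) ℝ := Jmat A Γ a u lam with hJ
  set w : Fin n → ℝ := fun i => 2 * Γ * u i ^ 3 / (a i + u i ^ 2) ^ 2 with hw
  have hden : ∀ i, 0 < a i + u i ^ 2 := fun i => by nlinarith [ha i, sq_nonneg (u i)]
  have hwpos : ∀ i, 0 < w i := fun i => by
    have h1 := hu i; have h2 := hden i
    exact div_pos (by nlinarith [mul_pos hΓ (pow_pos h1 3)]) (pow_pos h2 2)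
  -- r ≥ 0
  have hrnn : ∀ i, 0 ≤ rvec A Γ a u lam i := by
    intro i
    have hle : lam ≤ (calA A Γ a u *ᵥ u) i / u i :=
      ciInf_le (Finite.bddBelow_range _) i
    have : lam * u i ≤ (calA A Γ a u *ᵥ u) i := by
      rw [← le_div_iff₀ (hu i)]; exact hle
    simp only [rvec, Pi.sub_apply, Pi.smul_apply, smul_eq_mul]
    linarith
  -- J is a Z-matrix (off-diagonal entries equal those of A)
  have hZ : ∀ i j, i ≠ j → J i j ≤ 0 := by
    intro i j hij
    have : J i j = A i j := by
      simp [hJ, Jmat, Matrix.one_apply_ne hij, Matrix.diagonal_apply_ne _ hij]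
    rw [this]
    exact hA.1 i j hij
  -- J *ᵥ u = rvec + w
  have hJu : ∀ i, (J *ᵥ u) i = rvec A Γ a u lam i + w i := by
    intro i
    have e1 : (J *ᵥ u) i
        = (A *ᵥ u) i + (Γ - lam) * u i
          - Γ * ((a i - u i ^ 2) / (a i + u i ^ 2) ^ 2) * u i := by
      simp [hJ, Jmat, Matrix.sub_mulVec, Matrix.add_mulVec, Matrix.smul_mulVec,
        Matrix.mulVec_diagonal]
      ring
    have e2 : rvec A Γ a u lam i
        = (A *ᵥ u) i + Γ * (1 - 1 / (a i + u i ^ 2)) * u i - lam * u i := by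
      simp [rvec, calA, Matrix.add_mulVec, Matrix.smul_mulVec,
        Matrix.mulVec_diagonal]
      ring
    rw [e1, e2, hw]
    have := (hden i).ne'
    field_simp
    ring
  have hJupos : ∀ i, 0 < (J *ᵥ u) i := by
    intro i; rw [hJu i]; linarith [hrnn i, hwpos i]
  -- Newton equation: J *ᵥ Δ = δ • u - rvec
  have hN1 : J *ᵥ Δ = δ • u - rvec A Γ a u lam := by
    have := hN.1
    rw [sub_eq_iff_eq_add] at this
    rw [this]; ext i; simp; ring
  -- u ⬝ᵥ Δ = 0
  have husq : ∑ i, u i ^ 2 = 1 := by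
    have : Real.sqrt (∑ i, u i ^ 2) = 1 := hnorm
    exact Real.sqrt_eq_one.mp this
  have huu : u ⬝ᵥ u = 1 := by
    simp only [dotProduct]
    rw [← husq]; congr 1; ext i; ring
  have hud : u ⬝ᵥ Δ = 0 := by
    have h2 := hN.2
    rw [huu] at h2
    simpa using h2
  -- δ ≥ 0
  have hδ : 0 ≤ δ := by
    by_contra h
    push_neg at h
    -- J *ᵥ (-Δ) = rvec - δ • u > 0, so -Δ > 0, contradicting u ⬝ᵥ Δ = 0
    have hnegΔ : ∀ i, 0 < (J *ᵥ (-Δ)) i := by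
      intro i
      have : (J *ᵥ (-Δ)) i = rvec A Γ a u lam i - δ * u i := by
        rw [Matrix.mulVec_neg, hN1]
        simp only [Pi.neg_apply, Pi.sub_apply, Pi.smul_apply, smul_eq_mul]
        ring
      rw [this]
      nlinarith [hrnn i, hu i]
    have hpos := key_pos J hZ u hu hJupos (-Δ) hnegΔ
    have : u ⬝ᵥ Δ < 0 := by
      have hterm : ∀ i ∈ Finset.univ, u i * Δ i < 0 := by
        intro i _
        have h1 := hpos i
        simp only [Pi.neg_apply] at h1
        nlinarith [hu i]
      have : ∑ i, u i * Δ i < 0 := by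
        have hne : (Finset.univ : Finset (Fin n)).Nonempty := Finset.univ_nonempty
        calc ∑ i, u i * Δ i < ∑ _i : Fin n, (0:ℝ) :=
              Finset.sum_lt_sum_of_nonempty hne hterm
        _ = 0 := by simp
      simpa [dotProduct] using this
    rw [hud] at this
    exact absurd this (lt_irrefl 0)
  -- J *ᵥ (u + Δ) = δ • u + w > 0
  have hJv : ∀ i, 0 < (J *ᵥ (u + Δ)) i := by
    intro i
    have : (J *ᵥ (u + Δ)) i = δ * u i + w i := by
      rw [Matrix.mulVec_add, hN1]
      simp only [Pi.add_apply, Pi.sub_apply, Pi.smul_apply, smul_eq_mul]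
      rw [hJu i]
      ring
    rw [this]
    nlinarith [hu i, hwpos i]
  have hmain : ∀ i, 0 < (u + Δ) i := key_pos J hZ u hu hJupos (u + Δ) hJv
  refine ⟨hmain, ?_⟩
  intro θ hθ0 hθ1 i
  have h1 := hmain i
  simp only [Pi.add_apply, Pi.smul_apply, smul_eq_mul] at h1 ⊢
  nlinarith [hu i]
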